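/- For all q ∈ (1, 2], 4q + (q - 3)·2^q ≥ 0. -/
import Mathlib

theorem four_q_ineq (q : ℝ) (hq1 : 1 < q) (hq2 : q ≤ 2) :
    0 ≤ 4 * q + (q - 3) * (2:ℝ) ^ q := by
  have h2q : (2:ℝ) ^ q ≤ 2 * q := by
    have ha : (0:ℝ) ≤ 2 - q := by linarith
    have hb : (0:ℝ) ≤ q - 1 := by linarith
    have hab : (2 - q) + (q - 1) = 1 := by ring
    have hc := convexOn_exp.2 (Set.mem_univ (Real.log 2))
      (Set.mem_univ (2 * Real.log 2)) ha hb hab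
    have hrw : (2 - q) • Real.log 2 + (q - 1) • (2 * Real.log 2) = q * Real.log 2 := by
      simp [smul_eq_mul]; ring
    rw [hrw] at hc
    have he1 : Real.exp (Real.log 2) = 2 := Real.exp_log (by norm_num)
    have he2 : Real.exp (2 * Real.log 2) = 4 := by
      rw [two_mul, Real.exp_add, he1]; norm_num
    rw [he1, he2] at hc
    have hpow : (2:ℝ) ^ q = Real.exp (q * Real.log 2) := by
      rw [Real.rpow_def_of_pos (by norm_num), mul_comm]
    rw [hpow]
    simp only [smul_eq_mul] at hc
    linarith
  nlinarith [Real.rpow_pos_of_pos (by norm_num : (0:ℝ) < 2) q]
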